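/- Let p, q be probability vectors on Fin d. If there exist m ≥ 1 and a probability vector r on Fin m such that p ⊗ r ≺ q ⊗ r, then the number of indices i with q i ≠ 0 is at most the number of indices i with p i ≠ 0. -/

import Mathlib

open Finset

/-- max over finsets of card k of the sum of entries -/
noncomputable def maxSum {ι : Type*} [Fintype ι] (p : ι → ℝ) (k : ℕ) : ℝ :=
  sSup {x : ℝ | ∃ S : Finset ι, S.card = k ∧ x = ∑ i ∈ S, p i}

/-- majorization: equal total sums, and for each k the max k-term partial sum
of `p` is at most that of `q`. -/
def Maj {ι : Type*} [Fintype ι] (p q : ι → ℝ) : Prop :=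
  (∑ i, p i = ∑ i, q i) ∧ ∀ k : ℕ, maxSum p k ≤ maxSum q k

/-- a probability vector: nonnegative entries summing to one -/
def IsProbVec {ι : Type*} [Fintype ι] (p : ι → ℝ) : Prop :=
  (∀ i, 0 ≤ p i) ∧ ∑ i, p i = 1

/-- tensor product of two vectors -/
def tensor {ι κ : Type*} (p : ι → ℝ) (r : κ → ℝ) : ι × κ → ℝ :=
  fun x => p x.1 * r x.2

lemma maxSum_set_finite {ι : Type*} [Fintype ι] (p : ι → ℝ) (k : ℕ) :
    ({x : ℝ | ∃ S : Finset ι, S.card = k ∧ x = ∑ i ∈ S, p i}).Finite := by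
  have : {x : ℝ | ∃ S : Finset ι, S.card = k ∧ x = ∑ i ∈ S, p i} =
      (fun S : Finset ι => ∑ i ∈ S, p i) '' {S | S.card = k} := by
    ext x
    simp only [Set.mem_setOf_eq, Set.mem_image]
    constructor
    · rintro ⟨S, h1, h2⟩; exact ⟨S, h1, h2.symm⟩
    · rintro ⟨S, h1, h2⟩; exact ⟨S, h1, h2.symm⟩
  rw [this]
  exact (Set.toFinite _).image _

lemma maxSum_mem {ι : Type*} [Fintype ι] (p : ι → ℝ) (k : ℕ)
    (hk : k ≤ Fintype.card ι) :
    ∃ S : Finset ι, S.card = k ∧ maxSum p k = ∑ i ∈ S, p i := by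
  have hne : {x : ℝ | ∃ S : Finset ι, S.card = k ∧ x = ∑ i ∈ S, p i}.Nonempty := by
    obtain ⟨S, _, hS⟩ := Finset.exists_subset_card_eq (s := (univ : Finset ι)) (n := k) (by simpa using hk)
    exact ⟨∑ i ∈ S, p i, S, hS, rfl⟩
  exact hne.csSup_mem (maxSum_set_finite p k)

lemma le_maxSum {ι : Type*} [Fintype ι] (p : ι → ℝ) (S : Finset ι) :
    ∑ i ∈ S, p i ≤ maxSum p S.card :=
  le_csSup (maxSum_set_finite p S.card).bddAbove ⟨S, rfl, rfl⟩

/-- The number of nonzero entries (coherence rank) cannot increase under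
catalytic majorization. -/
theorem coherence_rank_nonincreasing_under_catalytic_majorization
    (d : ℕ) (p q : Fin d → ℝ) (hp : IsProbVec p) (hq : IsProbVec q)
    (h : ∃ m : ℕ, 1 ≤ m ∧ ∃ r : Fin m → ℝ, IsProbVec r ∧ Maj (tensor p r) (tensor q r)) :
    (Finset.univ.filter (fun i => q i ≠ 0)).card ≤
      (Finset.univ.filter (fun i => p i ≠ 0)).card := by
  obtain ⟨m, hm, r, hr, hmaj⟩ := h
  -- supports of tensors factor as products
  have hsuppT : ∀ v : Fin d → ℝ,
      (univ.filter (fun x : Fin d × Fin m => tensor v r x ≠ 0)) =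
        (univ.filter fun i => v i ≠ 0) ×ˢ (univ.filter fun j => r j ≠ 0) := by
    intro v
    ext ⟨i, j⟩
    simp [tensor, mul_ne_zero_iff, and_assoc]
  have hcardT : ∀ v : Fin d → ℝ,
      (univ.filter (fun x : Fin d × Fin m => tensor v r x ≠ 0)).card =
        (univ.filter fun i => v i ≠ 0).card * (univ.filter fun j => r j ≠ 0).card := by
    intro v
    rw [hsuppT v, Finset.card_product]
  -- total sums of tensors
  have hsum : ∀ v : Fin d → ℝ, (∑ i, v i = 1) → ∑ x : Fin d × Fin m, tensor v r x = 1 := by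
    intro v hv
    rw [Fintype.sum_prod_type]
    simp only [tensor]
    simp [← Finset.mul_sum, hr.2, hv]
  set St := univ.filter (fun x : Fin d × Fin m => tensor p r x ≠ 0) with hSt
  set k := St.card with hk
  -- maxSum of p⊗r at k is ≥ 1
  have h1 : (1 : ℝ) ≤ maxSum (tensor p r) k := by
    have : ∑ x ∈ St, tensor p r x = 1 := by
      rw [hSt, Finset.sum_filter_ne_zero]
      exact hsum p hp.2
    calc (1 : ℝ) = ∑ x ∈ St, tensor p r x := this.symm
      _ ≤ maxSum (tensor p r) St.card := le_maxSum _ _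
  have h2 : (1 : ℝ) ≤ maxSum (tensor q r) k := h1.trans (hmaj.2 k)
  -- the sup is attained
  have hkle : k ≤ Fintype.card (Fin d × Fin m) := by
    rw [hk]; exact Finset.card_le_univ _
  obtain ⟨S, hScard, hSval⟩ := maxSum_mem (tensor q r) k hkle
  have hSsum : (1 : ℝ) ≤ ∑ x ∈ S, tensor q r x := by rw [← hSval]; exact h2
  have hqnn : ∀ x : Fin d × Fin m, 0 ≤ tensor q r x :=
    fun x => mul_nonneg (hq.1 _) (hr.1 _)
  have htot : ∑ x : Fin d × Fin m, tensor q r x = 1 := hsum q hq.2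
  -- S contains the support of q⊗r
  have hsub : univ.filter (fun x : Fin d × Fin m => tensor q r x ≠ 0) ⊆ S := by
    intro x hx
    simp only [mem_filter, mem_univ, true_and] at hx
    by_contra hxS
    have hlt : ∑ y ∈ S, tensor q r y < ∑ y ∈ insert x S, tensor q r y := by
      rw [Finset.sum_insert hxS]
      have : 0 < tensor q r x := lt_of_le_of_ne (hqnn x) (Ne.symm hx)
      linarith
    have hle : ∑ y ∈ insert x S, tensor q r y ≤ ∑ y, tensor q r y :=
      Finset.sum_le_sum_of_subset_of_nonneg (Finset.subset_univ _)
        (fun i _ _ => hqnn i)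
    rw [htot] at hle
    linarith
  have hcard : (univ.filter (fun x : Fin d × Fin m => tensor q r x ≠ 0)).card ≤ k := by
    calc _ ≤ S.card := Finset.card_le_card hsub
      _ = k := hScard
  rw [hcardT q] at hcard
  rw [hk, hSt, hcardT p] at hcard
  -- support of r is nonempty
  have hrpos : 0 < (univ.filter fun j => r j ≠ 0).card := by
    rw [Finset.card_pos]
    by_contra hne
    rw [Finset.not_nonempty_iff_eq_empty] at hne
    have : ∑ j, r j = 0 := by
      rw [← Finset.sum_filter_ne_zero, hne, Finset.sum_empty]
    rw [hr.2] at this; norm_num at this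
  exact Nat.le_of_mul_le_mul_right hcard hrpos
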